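/- arXiv:1910.08920 — 6 statements merged into one kernel-verified Lean document; each statement's English description precedes it below -/
import Mathlib

section
/- Every n-connector is (k, n−k)-ST-robust for every k with 1 ≤ k ≤ n. -/
/-! ## Basic digraph notions -/

/-- A directed path in a digraph `Adj`: a nonempty list of vertices, each
consecutive pair joined by a directed edge.  Its length (number of edges)
is `p.length - 1`, so a path "of length d" is a list with `p.length = d + 1`. -/
def PathIn {V : Type*} (Adj : V → V → Prop) (p : List V) : Prop :=
  p ≠ [] ∧ p.Chain' Adj

/-- A digraph is acyclic (is a DAG) if it has no directed cycle. -/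
def Acyclic {V : Type*} (Adj : V → V → Prop) : Prop :=
  ∀ v, ¬ Relation.TransGen Adj v v

/-- In-degree of a vertex. -/
noncomputable def indeg {V : Type*} (Adj : V → V → Prop) (v : V) : ℕ :=
  Nat.card {u // Adj u v}

/-- Out-degree of a vertex. -/
noncomputable def outdeg {V : Type*} (Adj : V → V → Prop) (v : V) : ℕ :=
  Nat.card {w // Adj v w}

/-- `δ(v) = max(indeg(v), outdeg(v))`. -/
noncomputable def delta {V : Type*} (Adj : V → V → Prop) (v : V) : ℕ :=
  max (indeg Adj v) (outdeg Adj v)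

/-- The number of edges of a digraph. -/
noncomputable def numEdges {V : Type*} (Adj : V → V → Prop) : ℕ :=
  Nat.card {e : V × V // Adj e.1 e.2}

/-- `(e,d)`-depth-robustness: for every set `S` of at most `e` vertices,
the graph minus `S` contains a directed path of length `d` (i.e. `d` edges). -/
def DepthRobust {V : Type*} (Adj : V → V → Prop) (e d : ℕ) : Prop :=
  ∀ S : Finset V, S.card ≤ e →
    ∃ p : List V, PathIn Adj p ∧ (∀ v ∈ p, v ∉ S) ∧ p.length = d + 1

/-- `(e,d)`-edge-depth-robustness: for every set `F` of at most `e` edges,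
the graph minus `F` contains a directed path of length `d`. -/
def EdgeDepthRobust {V : Type*} (Adj : V → V → Prop) (e d : ℕ) : Prop :=
  ∀ F : Finset (V × V), (∀ f ∈ F, Adj f.1 f.2) → F.card ≤ e →
    ∃ p : List V, PathIn (fun u w => Adj u w ∧ (u, w) ∉ F) p ∧ p.length = d + 1

/-- `u` is joined to `v` by a directed path all of whose vertices avoid `S`. -/
def ConnAvoiding {V : Type*} (Adj : V → V → Prop) (S : Finset V) (u v : V) : Prop :=
  ∃ p : List V, PathIn Adj p ∧ (∀ x ∈ p, x ∉ S) ∧ p.head? = some u ∧ p.getLast? = some v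

/-- `u` is joined to `v` by a directed path of length at least `d` avoiding `S`. -/
def ConnAvoidingLen {V : Type*} (Adj : V → V → Prop) (S : Finset V) (d : ℕ) (u v : V) : Prop :=
  ∃ p : List V, PathIn Adj p ∧ (∀ x ∈ p, x ∉ S) ∧ p.head? = some u ∧
    p.getLast? = some v ∧ d + 1 ≤ p.length

/-! ## Digraphs with designated inputs and outputs -/

/-- A finite digraph with `n` designated (distinct) inputs and `n` designated
(distinct) outputs. -/
structure IOGraph (n : ℕ) where
  V : Type
  [fin : Fintype V]
  [dec : DecidableEq V]
  Adj : V → V → Prop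
  inp : Fin n ↪ V
  out : Fin n ↪ V

attribute [instance] IOGraph.fin IOGraph.dec

/-- `(k1,k2)`-ST-robustness: after deleting any set `D` of at most `k1` vertices
there remain at least `k2` inputs and `k2` outputs such that every one of these
inputs is connected to every one of these outputs in `G - D`. -/
def STRobust {n : ℕ} (G : IOGraph n) (k1 k2 : ℕ) : Prop :=
  ∀ D : Finset G.V, D.card ≤ k1 →
    ∃ A B : Finset (Fin n), k2 ≤ A.card ∧ k2 ≤ B.card ∧
      ∀ a ∈ A, ∀ b ∈ B, ConnAvoiding G.Adj D (G.inp a) (G.out b)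

/-- `(k1,k2,d)`-ST-robustness: as `STRobust`, with all the connecting paths of
length at least `d`. -/
def STRobustD {n : ℕ} (G : IOGraph n) (k1 k2 d : ℕ) : Prop :=
  ∀ D : Finset G.V, D.card ≤ k1 →
    ∃ A B : Finset (Fin n), k2 ≤ A.card ∧ k2 ≤ B.card ∧
      ∀ a ∈ A, ∀ b ∈ B, ConnAvoidingLen G.Adj D d (G.inp a) (G.out b)

/-- Maximally ST-robust: `(k, n-k)`-ST-robust for all `0 ≤ k ≤ n`. -/
def MaxSTRobust {n : ℕ} (G : IOGraph n) : Prop := ∀ k ≤ n, STRobust G k (n - k)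

/-- Maximally ST-robust with depth `d`: `(k, n-k, d)`-ST-robust for all `0 ≤ k ≤ n`. -/
def MaxSTRobustD {n : ℕ} (G : IOGraph n) (d : ℕ) : Prop := ∀ k ≤ n, STRobustD G k (n - k) d

/-- An `n`-superconcentrator: for every `1 ≤ r ≤ n` and every `r` inputs and `r`
outputs there are `r` vertex-disjoint directed paths connecting the chosen inputs
to the chosen outputs. -/
def Superconcentrator {n : ℕ} (G : IOGraph n) : Prop :=
  ∀ r, 1 ≤ r → r ≤ n → ∀ X Y : Finset (Fin n), X.card = r → Y.card = r →
    ∃ P : Fin r → List G.V,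
      (∀ i, PathIn G.Adj (P i) ∧ (∃ x ∈ X, (P i).head? = some (G.inp x)) ∧
        ∃ y ∈ Y, (P i).getLast? = some (G.out y)) ∧
      ∀ i j, i ≠ j → ∀ v ∈ P i, v ∉ P j

/-- An `n`-connector: an `n`-superconcentrator such that moreover, for every
`1 ≤ r ≤ n`, every sequence of `r` distinct inputs and every sequence of `r`
distinct outputs, there are `r` vertex-disjoint directed paths where the `i`-th
path goes from the `i`-th chosen input to the `i`-th chosen output. -/
def Connector {n : ℕ} (G : IOGraph n) : Prop :=
  Superconcentrator G ∧
  ∀ r, 1 ≤ r → r ≤ n → ∀ x y : Fin r ↪ Fin n,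
    ∃ P : Fin r → List G.V,
      (∀ i, PathIn G.Adj (P i) ∧ (P i).head? = some (G.inp (x i)) ∧
        (P i).getLast? = some (G.out (y i))) ∧
      ∀ i j, i ≠ j → ∀ v ∈ P i, v ∉ P j

/-- A bundled finite digraph. -/
structure Dig where
  V : Type
  [fin : Fintype V]
  [dec : DecidableEq V]
  Adj : V → V → Prop

attribute [instance] Dig.fin Dig.dec

/-- `(s,t,ε)`-hardness of a graph together with a challenge set `VC`: for every
set `S` of at most `s` vertices, at least a `(1-ε)` fraction of the nodes of `VC`
have depth at least `t` in `G - S` (i.e. are the endpoint of a directed path of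
length `≥ t` in `G - S`). -/
def Hard {T : Type*} (Adj : T → T → Prop) (VC : Finset T) (s t : ℕ) (ε : ℝ) : Prop :=
  ∀ S : Finset T, S.card ≤ s →
    (1 - ε) * (VC.card : ℝ) ≤
      (Set.ncard {v | v ∈ VC ∧ ∃ p : List T, PathIn Adj p ∧ (∀ x ∈ p, x ∉ S) ∧
        p.getLast? = some v ∧ t + 1 ≤ p.length} : ℝ)

/-- Every `n`-connector is `(k, n-k)`-ST-robust for every `k`
with `1 ≤ k ≤ n`. -/
theorem connector_is_STRobust {n : ℕ} (G : IOGraph n) (hG : Connector G) :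
    ∀ k, 1 ≤ k → k ≤ n → STRobust G k (n - k) := by
  classical
  intro k hk1 hkn D hD
  by_cases hkn' : n ≤ k
  · refine ⟨∅, ∅, ?_, ?_, by simp⟩ <;> simp [Nat.sub_eq_zero_of_le hkn']
  push_neg at hkn'
  set Bad : Fin n → Fin n → Prop :=
    fun a b => ¬ ConnAvoiding G.Adj D (G.inp a) (G.out b) with hBadDef
  set isM : Finset (Fin n × Fin n) → Prop := fun M =>
    (∀ p ∈ M, Bad p.1 p.2) ∧ Set.InjOn Prod.fst (M : Set (Fin n × Fin n)) ∧ Set.InjOn Prod.snd (M : Set (Fin n × Fin n)) with hisM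
  set s : Finset (Finset (Fin n × Fin n)) := Finset.univ.filter isM with hs
  have hsne : s.Nonempty := ⟨∅, by simp [hs, hisM, Set.InjOn]⟩
  obtain ⟨M, hMs, hmax⟩ := s.exists_max_image (fun t => t.card) hsne
  have hM : isM M := (Finset.mem_filter.mp hMs).2
  -- the maximum matching of "bad" pairs has size at most k
  have hMk : M.card ≤ k := by
    by_contra hbig
    push_neg at hbig
    obtain ⟨M', hM'sub, hM'card⟩ := Finset.exists_subset_card_eq (show k + 1 ≤ M.card from hbig)
    have e := M'.equivFinOfCardEq hM'card
    have hxinj : Function.Injective (fun i : Fin (k+1) => ((e.symm i : M') : Fin n × Fin n).1) := by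
      intro i j hij
      have := hM.2.1 (hM'sub (e.symm i).2) (hM'sub (e.symm j).2) hij
      exact e.symm.injective (Subtype.ext this)
    have hyinj : Function.Injective (fun i : Fin (k+1) => ((e.symm i : M') : Fin n × Fin n).2) := by
      intro i j hij
      have := hM.2.2 (hM'sub (e.symm i).2) (hM'sub (e.symm j).2) hij
      exact e.symm.injective (Subtype.ext this)
    obtain ⟨P, hP, hdisj⟩ := hG.2 (k+1) (Nat.le_add_left 1 k) (by omega)
      ⟨_, hxinj⟩ ⟨_, hyinj⟩
    have hhit : ∀ i, ∃ v ∈ P i, v ∈ D := by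
      intro i
      by_contra hno
      push_neg at hno
      have hbad : Bad ((e.symm i : M') : Fin n × Fin n).1 ((e.symm i : M') : Fin n × Fin n).2 :=
        hM.1 _ (hM'sub (e.symm i).2)
      exact hbad ⟨P i, (hP i).1, fun x hx => hno x hx, (hP i).2.1, (hP i).2.2⟩
    choose f hf1 hf2 using hhit
    have hfinj : Function.Injective f := by
      intro i j hij
      by_contra hne
      exact hdisj i j hne (f i) (hf1 i) (hij ▸ hf1 j)
    have : k + 1 ≤ D.card := by
      calc k + 1 = (Finset.univ.image f).card := by
            rw [Finset.card_image_of_injective _ hfinj, Finset.card_univ, Fintype.card_fin]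
        _ ≤ D.card := Finset.card_le_card (by
            intro v hv
            obtain ⟨i, _, rfl⟩ := Finset.mem_image.mp hv
            exact hf2 i)
    omega
  refine ⟨Finset.univ \ M.image Prod.fst, Finset.univ \ M.image Prod.snd, ?_, ?_, ?_⟩
  · rw [Finset.card_sdiff_of_subset (Finset.subset_univ _), Finset.card_univ, Fintype.card_fin]
    have h1 : (M.image Prod.fst).card ≤ M.card := Finset.card_image_le
    have := h1.trans hMk
    omega
  · rw [Finset.card_sdiff_of_subset (Finset.subset_univ _), Finset.card_univ, Fintype.card_fin]
    have h1 : (M.image Prod.snd).card ≤ M.card := Finset.card_image_le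
    have := h1.trans hMk
    omega
  · intro a ha b hb
    by_contra hbad
    have haim : a ∉ M.image Prod.fst := (Finset.mem_sdiff.mp ha).2
    have hbim : b ∉ M.image Prod.snd := (Finset.mem_sdiff.mp hb).2
    have habM : (a, b) ∉ M := fun h => haim (Finset.mem_image.mpr ⟨(a, b), h, rfl⟩)
    have hM2 : isM (insert (a, b) M) := by
      refine ⟨?_, ?_, ?_⟩
      · intro p hp
        rcases Finset.mem_insert.mp hp with rfl | hp
        · exact hbad
        · exact hM.1 p hp
      · intro p hp q hq hpq
        rw [Finset.coe_insert, Set.mem_insert_iff] at hp hq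
        rcases hp with rfl | hp <;> rcases hq with rfl | hq
        · rfl
        · exact absurd (Finset.mem_image.mpr ⟨q, hq, hpq.symm⟩) haim
        · exact absurd (Finset.mem_image.mpr ⟨p, hp, hpq⟩) haim
        · exact hM.2.1 hp hq hpq
      · intro p hp q hq hpq
        rw [Finset.coe_insert, Set.mem_insert_iff] at hp hq
        rcases hp with rfl | hp <;> rcases hq with rfl | hq
        · rfl
        · exact absurd (Finset.mem_image.mpr ⟨q, hq, hpq.symm⟩) hbim
        · exact absurd (Finset.mem_image.mpr ⟨p, hp, hpq⟩) hbim
        · exact hM.2.2 hp hq hpq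
    have := hmax (insert (a, b) M) (Finset.mem_filter.mpr ⟨Finset.mem_univ _, hM2⟩)
    rw [Finset.card_insert_of_notMem habM] at this
    omega
end

section
/- Let c > 0 and let H be a (c·n, n^{2/3})-depth-robust DAG on n nodes. Then for every set S of at most c·n/2 vertices of H, the graph H − S contains at least ⌊c·n^{1/3}/2⌋ pairwise vertex-disjoint directed paths, each of length n^{2/3}. -/
/-- Greedy extraction of disjoint paths from a depth-robust graph. -/
lemma extract_paths {W : Type} [Fintype W] [DecidableEq W]
    (Adj : W → W → Prop) (e d : ℕ)
    (hdr : DepthRobust Adj e d) (S : Finset W)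
    (m : ℕ) (hbud : ∀ i < m, S.card + i * (d + 1) ≤ e) :
    ∃ P : Fin m → List W,
      (∀ i, PathIn Adj (P i) ∧ (∀ v ∈ P i, v ∉ S) ∧ (P i).length = d + 1) ∧
      ∀ i j, i ≠ j → ∀ v ∈ P i, v ∉ P j := by
  induction m with
  | zero => exact ⟨Fin.elim0, fun i => i.elim0, fun i => i.elim0⟩
  | succ m ih =>
    obtain ⟨P, hP, hdisj⟩ := ih (fun i hi => hbud i (Nat.lt_succ_of_lt hi))
    set T : Finset W := S ∪ Finset.univ.biUnion (fun i : Fin m => (P i).toFinset) with hT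
    have hTcard : T.card ≤ e := by
      calc T.card ≤ S.card + (Finset.univ.biUnion (fun i : Fin m => (P i).toFinset)).card :=
            Finset.card_union_le _ _
        _ ≤ S.card + ∑ i : Fin m, (P i).toFinset.card := by
            gcongr; exact Finset.card_biUnion_le
        _ ≤ S.card + ∑ _i : Fin m, (d + 1) := by
            gcongr with i _
            exact le_trans (List.toFinset_card_le _) (le_of_eq (hP i).2.2)
        _ = S.card + m * (d + 1) := by simp [Finset.sum_const, mul_comm]
        _ ≤ e := hbud m (Nat.lt_succ_self m)
    obtain ⟨p, hp, hpT, hplen⟩ := hdr T hTcard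
    have hmemT : ∀ i : Fin m, ∀ v ∈ P i, v ∈ T := by
      intro i v hv
      simp only [hT, Finset.mem_union, Finset.mem_biUnion, Finset.mem_univ, true_and]
      exact Or.inr ⟨i, List.mem_toFinset.mpr hv⟩
    refine ⟨fun i => if h : (i : ℕ) < m then P ⟨i, h⟩ else p, ?_, ?_⟩
    · intro i
      by_cases h : (i : ℕ) < m
      · simp only [h, dif_pos]
        exact hP ⟨i, h⟩
      · simp only [h, dif_neg, not_false_iff]
        refine ⟨hp, fun v hv hvS => hpT v hv ?_, hplen⟩
        simp [hT, hvS]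
    · intro i j hij v hvi hvj
      by_cases hi : (i : ℕ) < m <;> by_cases hj : (j : ℕ) < m
      · simp only [hi, dif_pos] at hvi
        simp only [hj, dif_pos] at hvj
        refine hdisj ⟨i, hi⟩ ⟨j, hj⟩ ?_ v hvi hvj
        intro hEq
        exact hij (Fin.ext (by simpa using congrArg Fin.val hEq))
      · simp only [hi, dif_pos] at hvi
        simp only [hj, dif_neg, not_false_iff] at hvj
        exact hpT v hvj (hmemT ⟨i, hi⟩ v hvi)
      · simp only [hi, dif_neg, not_false_iff] at hvi
        simp only [hj, dif_pos] at hvj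
        exact hpT v hvi (hmemT ⟨j, hj⟩ v hvj)
      · exact hij (Fin.ext (by omega))

/-- If `H` is a `(c·n, n^{2/3})`-depth-robust DAG on `n`
nodes, then for every set `S` of at most `c·n/2` vertices, `H − S` contains at
least `⌊c·n^{1/3}/2⌋` pairwise vertex-disjoint directed paths, each of length
`n^{2/3}`. -/
theorem disjoint_paths_in_depth_robust {W : Type} [Fintype W] [DecidableEq W]
    (c : ℝ) (hc : 0 < c) (n : ℕ) (Adj : W → W → Prop)
    (hacyc : Acyclic Adj) (hn : Nat.card W = n)
    (hdr : DepthRobust Adj ⌊c * n⌋₊ ⌊(n : ℝ) ^ ((2 : ℝ) / 3)⌋₊) :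
    ∀ S : Finset W, (S.card : ℝ) ≤ c * n / 2 →
      ∃ P : Fin ⌊c * (n : ℝ) ^ ((1 : ℝ) / 3) / 2⌋₊ → List W,
        (∀ i, PathIn Adj (P i) ∧ (∀ v ∈ P i, v ∉ S) ∧
          (P i).length = ⌊(n : ℝ) ^ ((2 : ℝ) / 3)⌋₊ + 1) ∧
        ∀ i j, i ≠ j → ∀ v ∈ P i, v ∉ P j := by
  intro S hS
  set e := ⌊c * n⌋₊ with he
  set d := ⌊(n : ℝ) ^ ((2 : ℝ) / 3)⌋₊ with hdd
  set k := ⌊c * (n : ℝ) ^ ((1 : ℝ) / 3) / 2⌋₊ with hk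
  by_cases hne : n ≤ e
  · -- deleting all vertices is allowed, contradiction with depth-robustness
    exfalso
    have hcard : (Finset.univ : Finset W).card ≤ e := by
      rw [Finset.card_univ, ← Nat.card_eq_fintype_card, hn]; exact hne
    obtain ⟨p, hp, hpuniv, _⟩ := hdr Finset.univ hcard
    obtain ⟨x, hx⟩ := List.exists_mem_of_ne_nil p hp.1
    exact hpuniv x hx (Finset.mem_univ x)
  · push_neg at hne
    have hn0 : (0 : ℝ) ≤ (n : ℝ) := Nat.cast_nonneg n
    have hcn_lt : c * n < n := by
      have := (Nat.floor_lt (mul_nonneg hc.le hn0)).mp hne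
      exact_mod_cast this
    have hnpos : (0 : ℝ) < n := lt_of_le_of_lt (mul_nonneg hc.le hn0) hcn_lt
    have hn1 : (1 : ℝ) ≤ n := by
      have : 0 < n := by exact_mod_cast hnpos
      exact_mod_cast this
    have hc1 : c < 1 := by
      have := lt_of_mul_lt_mul_right (by linarith [hcn_lt] : c * n < 1 * n) hnpos.le
      exact this
    have hpow13 : (0 : ℝ) ≤ (n : ℝ) ^ ((1 : ℝ) / 3) := Real.rpow_nonneg hn0 _
    have hpow23 : (0 : ℝ) ≤ (n : ℝ) ^ ((2 : ℝ) / 3) := Real.rpow_nonneg hn0 _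
    have hpowle : (n : ℝ) ^ ((1 : ℝ) / 3) ≤ (n : ℝ) ^ ((2 : ℝ) / 3) :=
      Real.rpow_le_rpow_of_exponent_le hn1 (by norm_num)
    have hmul : (n : ℝ) ^ ((1 : ℝ) / 3) * (n : ℝ) ^ ((2 : ℝ) / 3) = n := by
      rw [← Real.rpow_add hnpos]
      norm_num
    have hdle : (d : ℝ) ≤ (n : ℝ) ^ ((2 : ℝ) / 3) := Nat.floor_le hpow23
    have hkle : (k : ℝ) ≤ c * (n : ℝ) ^ ((1 : ℝ) / 3) / 2 :=
      Nat.floor_le (by positivity)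
    have hfl : c * n < (e : ℝ) + 1 := Nat.lt_floor_add_one _
    have hbud : ∀ i < k, S.card + i * (d + 1) ≤ e := by
      intro i hik
      have hi1 : (i : ℝ) + 1 ≤ k := by exact_mod_cast hik
      have hi0 : (0 : ℝ) ≤ (i : ℝ) := Nat.cast_nonneg i
      have hprod : (i : ℝ) * ((d : ℝ) + 1) ≤
          (c * (n : ℝ) ^ ((1 : ℝ) / 3) / 2 - 1) * ((n : ℝ) ^ ((2 : ℝ) / 3) + 1) := by
        apply mul_le_mul (by linarith) (by linarith) (by linarith) (by linarith)
      have key : (S.card : ℝ) + (i : ℝ) * ((d : ℝ) + 1) < e := by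
        nlinarith [hprod, hS, hfl, hmul, hpowle, hpow13, hpow23, hc1, hn1]
      have : ((S.card + i * (d + 1) : ℕ) : ℝ) < (e : ℝ) := by push_cast; linarith
      exact le_of_lt (by exact_mod_cast this)
    exact extract_paths Adj e d hdr S k hbud
end

section
/- Let G be an n-superconcentrator with input set I and output set O, let S ⊆ V(G), and let A ⊆ O with |A| > |S|. Then the set BAD of inputs u ∈ I such that no node of A is reachable from u by a directed path in G − S satisfies |BAD| ≤ |S|. -/
/-- In an `n`-superconcentrator, for any vertex set `S` and
any set `A` of more than `|S|` outputs, the set of inputs from which no output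
of `A` is reachable in `G - S` has size at most `|S|`. -/
theorem superconcentrator_bad_inputs {n : ℕ} (G : IOGraph n)
    (hG : Superconcentrator G) (S : Finset G.V) (A : Finset (Fin n))
    (hA : S.card < A.card) :
    Set.ncard {i : Fin n | ∀ a ∈ A, ¬ ConnAvoiding G.Adj S (G.inp i) (G.out a)} ≤
      S.card := by
  classical
  by_contra hbad
  push_neg at hbad
  set BAD : Set (Fin n) :=
    {i : Fin n | ∀ a ∈ A, ¬ ConnAvoiding G.Adj S (G.inp i) (G.out a)} with hBAD
  have hfin : BAD.Finite := Set.toFinite _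
  set B : Finset (Fin n) := hfin.toFinset with hB
  have hcardB : BAD.ncard = B.card := by
    exact Set.ncard_eq_toFinset_card BAD hfin
  set r : ℕ := S.card + 1 with hr
  have hrB : r ≤ B.card := by omega
  have hrA : r ≤ A.card := by omega
  obtain ⟨X, hXB, hXcard⟩ := Finset.exists_subset_card_eq hrB
  obtain ⟨Y, hYA, hYcard⟩ := Finset.exists_subset_card_eq hrA
  have hrn : r ≤ n := by
    calc r = X.card := hXcard.symm
    _ ≤ (Finset.univ : Finset (Fin n)).card := Finset.card_le_univ X
    _ = n := by simp
  obtain ⟨P, hP, hdisj⟩ := hG r (by omega) hrn X Y hXcard hYcard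
  -- some path avoids S
  have : ∃ i : Fin r, ∀ v ∈ P i, v ∉ S := by
    by_contra hall
    push_neg at hall
    choose g hg1 hg2 using hall
    have hinj : Set.InjOn g (Finset.univ : Finset (Fin r)) := by
      intro i _ j _ hij
      by_contra hne
      exact hdisj i j hne (g i) (hg1 i) (hij ▸ hg1 j)
    have := Finset.card_le_card_of_injOn g (fun i _ => hg2 i) hinj
    simp at this
    omega
  obtain ⟨i, hi⟩ := this
  obtain ⟨hpath, ⟨x, hxX, hhead⟩, ⟨y, hyY, hlast⟩⟩ := hP i
  have hxBAD : x ∈ BAD := by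
    have := hXB hxX
    rwa [hB, Set.Finite.mem_toFinset] at this
  exact hxBAD y (hYA hyY) ⟨P i, hpath, hi, hhead, hlast⟩
end

section
/- Let c > 0 and let G be a DAG on a vertex set W containing two designated subsets P ⊆ W and Q ⊆ W such that for every S ⊆ W with |S| ≤ c·n/2 there exist sets A ⊆ P and B ⊆ Q with |A| ≥ 9c·n/40 and |B| ≥ 9c·n/40 such that every node of A is connected to every node of B by a directed path in G − S. Let M be the DAG obtained by taking an n-superconcentrator SC1 and an n-superconcentrator SC2 (vertex-disjoint from G and each other), connecting the n outputs of SC1 bijectively to n distinct nodes covering P, and connecting nodes covering Q bijectively to the n inputs of SC2; declare the inputs of M to be the inputs of SC1 and the outputs of M to be the outputs of SC2. Then, with c' = 9c/40, for every set S ⊆ V(M) with |S| ≤ c'·n/2, M is (|S|, n − |S|)-ST-robust. -/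
/-- The sandwich construction: a middle graph on vertex set `W` placed between
two `n`-superconcentrators `SC1` and `SC2`.  The `n` outputs of `SC1` are
connected bijectively (via the embedding `f`) to `n` distinct nodes of `W`
covering `P`, and `n` distinct nodes of `W` covering `Q` are connected
bijectively (via `g`) to the `n` inputs of `SC2`.  The inputs of the resulting
graph are the inputs of `SC1` and its outputs are the outputs of `SC2`. -/
def sandwich {W : Type} [Fintype W] [DecidableEq W] (GAdj : W → W → Prop)
    {n : ℕ} (SC1 SC2 : IOGraph n) (f g : Fin n ↪ W) : IOGraph n where
  V := SC1.V ⊕ W ⊕ SC2.V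
  Adj := fun x y =>
    (∃ a b, SC1.Adj a b ∧ x = Sum.inl a ∧ y = Sum.inl b) ∨
    (∃ w w', GAdj w w' ∧ x = Sum.inr (Sum.inl w) ∧ y = Sum.inr (Sum.inl w')) ∨
    (∃ a b, SC2.Adj a b ∧ x = Sum.inr (Sum.inr a) ∧ y = Sum.inr (Sum.inr b)) ∨
    (∃ i : Fin n, x = Sum.inl (SC1.out i) ∧ y = Sum.inr (Sum.inl (f i))) ∨
    (∃ i : Fin n, x = Sum.inr (Sum.inl (g i)) ∧ y = Sum.inr (Sum.inr (SC2.inp i)))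
  inp := SC1.inp.trans ⟨Sum.inl, Sum.inl_injective⟩
  out := SC2.out.trans
    ⟨fun a => Sum.inr (Sum.inr a), fun a b h => by simpa using h⟩


/-! ## Auxiliary lemmas -/

open Relation

private lemma pathToRTG {V : Type*} {Adj : V → V → Prop} {S : Finset V} :
    ∀ (p : List V) {u v : V}, p.Chain' Adj → p.head? = some u → p.getLast? = some v →
      (∀ x ∈ p, x ∉ S) → ReflTransGen (fun a b => Adj a b ∧ b ∉ S) u v
  | [], u, v, _, hh, _, _ => by simp at hh
  | [x], u, v, _, hh, hl, _ => by
      simp at hh hl; subst hh; subst hl; exact .refl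
  | x :: y :: t, u, v, hch, hh, hl, hav => by
      have hadj : Adj x y := (List.isChain_cons_cons.mp hch).1
      have hch' : (y :: t).Chain' Adj := (List.isChain_cons_cons.mp hch).2
      have hu : u = x := by simpa using hh.symm
      have hl' : (y :: t).getLast? = some v := by
        rw [← hl]; rfl
      have ih := pathToRTG (y :: t) hch' rfl hl'
        (fun z hz => hav z (List.mem_cons_of_mem _ hz))
      subst hu
      exact ReflTransGen.head ⟨hadj, hav y (by simp)⟩ ih

private lemma rtgToConn {V : Type*} {Adj : V → V → Prop} {S : Finset V} {u v : V}
    (hu : u ∉ S)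
    (h : ReflTransGen (fun a b => Adj a b ∧ b ∉ S) u v) : ConnAvoiding Adj S u v := by
  induction h with
  | refl => exact ⟨[u], ⟨by simp, List.isChain_singleton u⟩, by simpa using hu, rfl, rfl⟩
  | @tail b c hxb hstep ih =>
      obtain ⟨p, ⟨hne, hch⟩, hav, hh, hl⟩ := ih
      refine ⟨p ++ [c], ⟨by simp, ?_⟩, ?_, ?_, ?_⟩
      · refine List.isChain_append.mpr ⟨hch, List.isChain_singleton c, ?_⟩
        intro x hx y hy
        rw [hl] at hx
        simp at hx hy
        rw [← hx, ← hy]; exact hstep.1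
      · intro x hx
        rcases List.mem_append.mp hx with h1 | h2
        · exact hav x h1
        · simp at h2; rw [h2]; exact hstep.2
      · cases p with
        | nil => exact absurd rfl hne
        | cons a q => simpa using hh
      · rw [List.getLast?_concat]

private lemma rtg_shift {V : Type*} {rel : V → V → Prop} {S : Finset V} {x y : V}
    (h : ReflTransGen (fun u v => rel u v ∧ u ∉ S) x y) :
    y ∉ S → ReflTransGen (fun u v => rel u v ∧ v ∉ S) x y := by
  induction h with
  | refl => exact fun _ => .refl
  | tail h1 h2 ih => exact fun hy => (ih h2.2).tail ⟨h2.1, hy⟩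

/-- The reversed IO graph. -/
private def revIO {n : ℕ} (G : IOGraph n) : IOGraph n :=
  { V := G.V, fin := G.fin, dec := G.dec, Adj := fun a b => G.Adj b a,
    inp := G.out, out := G.inp }

private lemma revSC {n : ℕ} (G : IOGraph n) (h : Superconcentrator G) :
    Superconcentrator (revIO G) := by
  intro r h1 hr X Y hX hY
  obtain ⟨P, hP, hdisj⟩ := h r h1 hr Y X hY hX
  refine ⟨fun i => (P i).reverse, fun i => ?_, fun i j hij v hv hv2 =>
    hdisj i j hij v (List.mem_reverse.mp hv) (List.mem_reverse.mp hv2)⟩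
  obtain ⟨⟨hne, hch⟩, ⟨y, hy, hhead⟩, ⟨x, hx, hlast⟩⟩ := hP i
  refine ⟨⟨List.reverse_ne_nil_iff.mpr hne, ?_⟩, ⟨x, hx, List.head?_reverse.trans hlast⟩,
    ⟨y, hy, List.getLast?_reverse.trans hhead⟩⟩
  exact List.isChain_reverse.mpr hch

/-- Core counting lemma: inputs that cannot reach (avoiding `D'`) any output
indexed by `T` are few, given a large witness set `Y`. -/
private lemma bad_card_le {n : ℕ} (SC : IOGraph n) (hSC : Superconcentrator SC)
    (D' : Finset SC.V) (T Y : Finset (Fin n))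
    (hYT : ∀ i ∈ Y, i ∈ T ∨ SC.out i ∈ D')
    (hYcard : D'.card + 1 ≤ Y.card) (hrn : D'.card + 1 ≤ n)
    (Bad : Finset (Fin n))
    (hBad : ∀ j ∈ Bad, ¬(SC.inp j ∉ D' ∧ ∃ i ∈ T,
        ReflTransGen (fun a b => SC.Adj a b ∧ b ∉ D') (SC.inp j) (SC.out i))) :
    Bad.card ≤ D'.card := by
  by_contra hlt
  push_neg at hlt
  set r := D'.card + 1 with hr
  obtain ⟨X, hXsub, hXcard⟩ := Finset.exists_subset_card_eq (s := Bad) (n := r) (by omega)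
  obtain ⟨Y', hYsub, hYcard'⟩ := Finset.exists_subset_card_eq (s := Y) (n := r) hYcard
  obtain ⟨P, hP, hdisj⟩ := hSC r (by omega) hrn X Y' hXcard hYcard'
  have key : ∀ k : Fin r, ∃ v, v ∈ P k ∧ v ∈ D' := by
    intro k
    by_contra hno
    push_neg at hno
    obtain ⟨⟨hne, hch⟩, ⟨x, hxX, hh⟩, ⟨y, hyY, hl⟩⟩ := hP k
    rcases hYT y (hYsub hyY) with hyT | hyD
    · exact hBad x (hXsub hxX)
        ⟨hno _ (List.mem_of_mem_head? (by simp [hh])), y, hyT,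
          pathToRTG (P k) hch hh hl hno⟩
    · exact hno _ (List.mem_of_mem_getLast? (by simp [hl])) hyD
  choose φ hφmem hφD using key
  have hinj : Function.Injective φ := by
    intro i j hij
    by_contra hne
    exact hdisj i j hne (φ i) (hφmem i) (hij ▸ hφmem j)
  have hle : r ≤ D'.card := by
    calc r = (Finset.univ.image φ).card := by
          rw [Finset.card_image_of_injective _ hinj, Finset.card_univ, Fintype.card_fin]
      _ ≤ D'.card := Finset.card_le_card (fun v hv => by
          obtain ⟨k, _, rfl⟩ := Finset.mem_image.mp hv; exact hφD k)
  omega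


set_option maxHeartbeats 1600000 in
/-- Suppose the middle graph `G` (on `W`, with designated
subsets `P`, `Q`) has the property that after removing any `≤ c·n/2` vertices
there remain `A ⊆ P`, `B ⊆ Q` of size `≥ 9c·n/40` with every node of `A`
connected to every node of `B`.  Then, with `c' = 9c/40`, the sandwich of `G`
between two `n`-superconcentrators is `(|S|, n − |S|)`-ST-robust for every
vertex set `S` with `|S| ≤ c'·n/2`. -/
theorem sandwich_STRobust {W : Type} [Fintype W] [DecidableEq W]
    (c : ℝ) (hc : 0 < c) (n : ℕ) (GAdj : W → W → Prop) (P Q : Finset W)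
    (hmid : ∀ S : Finset W, (S.card : ℝ) ≤ c * n / 2 →
      ∃ A B : Finset W, A ⊆ P ∧ B ⊆ Q ∧
        9 * c * n / 40 ≤ (A.card : ℝ) ∧ 9 * c * n / 40 ≤ (B.card : ℝ) ∧
        ∀ u ∈ A, ∀ v ∈ B, ConnAvoiding GAdj S u v)
    (SC1 SC2 : IOGraph n)
    (hSC1 : Superconcentrator SC1) (hSC2 : Superconcentrator SC2)
    (f g : Fin n ↪ W)
    (hf : (P : Set W) ⊆ Set.range f) (hg : (Q : Set W) ⊆ Set.range g) :
    ∀ S : Finset (sandwich GAdj SC1 SC2 f g).V,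
      (S.card : ℝ) ≤ (9 * c / 40) * n / 2 →
      STRobust (sandwich GAdj SC1 SC2 f g) S.card (n - S.card) := by
  classical
  intro S hS D hD
  rcases Nat.eq_zero_or_pos n with hn | hn
  · refine ⟨∅, ∅, ?_, ?_, by simp⟩ <;> simp [hn]
  have hc0 : (0:ℝ) ≤ c := hc.le
  have hn0 : (0:ℝ) ≤ (n:ℝ) := Nat.cast_nonneg n
  have hn1R : (1:ℝ) ≤ (n:ℝ) := by exact_mod_cast hn
  -- decompose D
  set D1 : Finset SC1.V := Finset.univ.filter
    (fun v => (Sum.inl v : SC1.V ⊕ W ⊕ SC2.V) ∈ D) with hD1def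
  set DW : Finset W := Finset.univ.filter
    (fun w => (Sum.inr (Sum.inl w) : SC1.V ⊕ W ⊕ SC2.V) ∈ D) with hDWdef
  set D2 : Finset SC2.V := Finset.univ.filter
    (fun v => (Sum.inr (Sum.inr v) : SC1.V ⊕ W ⊕ SC2.V) ∈ D) with hD2def
  have hinjW : Function.Injective (fun w : W => (Sum.inr (Sum.inl w) : SC1.V ⊕ W ⊕ SC2.V)) :=
    fun a b h => by simpa using h
  have h1W : D1.card + DW.card ≤ D.card := by
    have hsub : (D1.image Sum.inl ∪ DW.image (fun w => Sum.inr (Sum.inl w))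
        : Finset (SC1.V ⊕ W ⊕ SC2.V)) ⊆ D := by
      intro v hv
      rcases Finset.mem_union.mp hv with h | h <;>
        · obtain ⟨w, hw, rfl⟩ := Finset.mem_image.mp h
          first
          | exact (Finset.mem_filter.mp hw).2
          | simpa [hDWdef] using hw
    have hdisj : Disjoint (D1.image Sum.inl)
        (DW.image (fun w => (Sum.inr (Sum.inl w) : SC1.V ⊕ W ⊕ SC2.V))) := by
      simp [Finset.disjoint_left]
    calc D1.card + DW.card
        = ((D1.image Sum.inl ∪ DW.image (fun w => Sum.inr (Sum.inl w)))
            : Finset (SC1.V ⊕ W ⊕ SC2.V)).card := by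
          rw [Finset.card_union_of_disjoint hdisj,
            Finset.card_image_of_injective _ Sum.inl_injective,
            Finset.card_image_of_injective _ hinjW]
      _ ≤ D.card := Finset.card_le_card hsub
  have hinj2 : Function.Injective (fun v : SC2.V => (Sum.inr (Sum.inr v) : SC1.V ⊕ W ⊕ SC2.V)) :=
    fun a b h => by simpa using h
  have h2W : D2.card + DW.card ≤ D.card := by
    have hsub : (D2.image (fun v => Sum.inr (Sum.inr v)) ∪ DW.image (fun w => Sum.inr (Sum.inl w))
        : Finset (SC1.V ⊕ W ⊕ SC2.V)) ⊆ D := by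
      intro v hv
      rcases Finset.mem_union.mp hv with h | h <;>
        · obtain ⟨w, hw, rfl⟩ := Finset.mem_image.mp h
          first
          | exact (Finset.mem_filter.mp hw).2
          | simpa [hDWdef] using hw
    have hdisj : Disjoint (D2.image (fun v => (Sum.inr (Sum.inr v) : SC1.V ⊕ W ⊕ SC2.V)))
        (DW.image (fun w => (Sum.inr (Sum.inl w) : SC1.V ⊕ W ⊕ SC2.V))) := by
      simp [Finset.disjoint_left]
    calc D2.card + DW.card
        = ((D2.image (fun v => Sum.inr (Sum.inr v)) ∪ DW.image (fun w => Sum.inr (Sum.inl w)))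
            : Finset (SC1.V ⊕ W ⊕ SC2.V)).card := by
          rw [Finset.card_union_of_disjoint hdisj,
            Finset.card_image_of_injective _ hinj2,
            Finset.card_image_of_injective _ hinjW]
      _ ≤ D.card := Finset.card_le_card hsub
  have hDcS : D.card ≤ S.card := hD
  have hScast : (S.card:ℝ) ≤ 9*c*(n:ℝ)/80 := by nlinarith [hS]
  -- middle graph
  have hDWc : (DW.card : ℝ) ≤ c * n / 2 := by
    have h1 : DW.card ≤ S.card := by omega
    have h2 : (DW.card:ℝ) ≤ (S.card:ℝ) := Nat.cast_le.mpr h1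
    nlinarith
  obtain ⟨A0, B0, hA0P, hB0Q, hA0c, hB0c, hconn⟩ := hmid DW hDWc
  -- indices of A0 and B0
  set X0 : Finset (Fin n) := Finset.univ.filter (fun i => f i ∈ A0) with hX0def
  have hX0img : X0.image f = A0 := by
    ext w
    simp only [Finset.mem_image, hX0def, Finset.mem_filter, Finset.mem_univ, true_and]
    constructor
    · rintro ⟨i, hi, rfl⟩; exact hi
    · intro hw
      obtain ⟨i, rfl⟩ := hf (Finset.mem_coe.mpr (hA0P hw))
      exact ⟨i, hw, rfl⟩
  have hX0card : X0.card = A0.card := by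
    rw [← hX0img, Finset.card_image_of_injective _ f.injective]
  have hA0n : A0.card ≤ n := by
    have hsub : A0 ⊆ Finset.univ.image f := fun w hw => by
      obtain ⟨i, rfl⟩ := hf (Finset.mem_coe.mpr (hA0P hw))
      exact Finset.mem_image.mpr ⟨i, Finset.mem_univ i, rfl⟩
    calc A0.card ≤ (Finset.univ.image f).card := Finset.card_le_card hsub
      _ = n := by rw [Finset.card_image_of_injective _ f.injective,
            Finset.card_univ, Fintype.card_fin]
  set Z0 : Finset (Fin n) := Finset.univ.filter (fun i => g i ∈ B0) with hZ0def
  have hZ0img : Z0.image g = B0 := by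
    ext w
    simp only [Finset.mem_image, hZ0def, Finset.mem_filter, Finset.mem_univ, true_and]
    constructor
    · rintro ⟨i, hi, rfl⟩; exact hi
    · intro hw
      obtain ⟨i, rfl⟩ := hg (Finset.mem_coe.mpr (hB0Q hw))
      exact ⟨i, hw, rfl⟩
  have hZ0card : Z0.card = B0.card := by
    rw [← hZ0img, Finset.card_image_of_injective _ g.injective]
  -- arithmetic
  have hX0big : (9:ℝ)*c*(n:ℝ)/40 ≤ (X0.card:ℝ) := by rw [hX0card]; exact hA0c
  have hZ0big : (9:ℝ)*c*(n:ℝ)/40 ≤ (Z0.card:ℝ) := by rw [hZ0card]; exact hB0c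
  have h2S : 2 * S.card ≤ X0.card := by
    have : ((2 * S.card : ℕ):ℝ) ≤ (X0.card:ℝ) := by push_cast; linarith
    exact_mod_cast this
  have h2S' : 2 * S.card ≤ Z0.card := by
    have : ((2 * S.card : ℕ):ℝ) ≤ (Z0.card:ℝ) := by push_cast; linarith
    exact_mod_cast this
  have hA0ncast : (A0.card:ℝ) ≤ (n:ℝ) := Nat.cast_le.mpr hA0n
  have hSn2 : (S.card : ℝ) ≤ (n:ℝ)/2 := by nlinarith
  have hX0pos : 0 < X0.card := by
    have h1 : (0:ℝ) < (X0.card:ℝ) := by nlinarith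
    exact_mod_cast h1
  have hZ0pos : 0 < Z0.card := by
    have h1 : (0:ℝ) < (Z0.card:ℝ) := by nlinarith
    exact_mod_cast h1
  have hrn1 : D1.card + 1 ≤ n := by
    have h1 : (D1.card:ℝ) ≤ (S.card:ℝ) := Nat.cast_le.mpr (by omega)
    have h2 : (D1.card : ℝ) < (n:ℝ) := by linarith
    have := Nat.cast_lt (α := ℝ) |>.mp h2
    omega
  have hrn2 : D2.card + 1 ≤ n := by
    have h1 : (D2.card:ℝ) ≤ (S.card:ℝ) := Nat.cast_le.mpr (by omega)
    have h2 : (D2.card : ℝ) < (n:ℝ) := by linarith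
    have := Nat.cast_lt (α := ℝ) |>.mp h2
    omega
  -- good-target index sets for SC1
  set T1 : Finset (Fin n) := X0.filter (fun i => SC1.out i ∉ D1 ∧ f i ∉ DW) with hT1def
  set Y1 : Finset (Fin n) := X0.filter (fun i => SC1.out i ∈ D1 ∨ f i ∉ DW) with hY1def
  have hYT1 : ∀ i ∈ Y1, i ∈ T1 ∨ SC1.out i ∈ D1 := by
    intro i hi
    simp only [hY1def, hT1def, Finset.mem_filter] at hi ⊢
    tauto
  have hY1sub : Y1 ⊆ X0 := Finset.filter_subset _ _
  have hsd1 : (X0 \ Y1).card ≤ DW.card := by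
    apply Finset.card_le_card_of_injOn f ?_ f.injective.injOn
    intro i hi
    simp only [Finset.coe_sdiff, Set.mem_diff, Finset.mem_coe, Finset.mem_sdiff] at hi
    by_contra hfi
    exact hi.2 (Finset.mem_filter.mpr ⟨hi.1, Or.inr hfi⟩)
  have hsplit1 : (X0 \ Y1).card + Y1.card = X0.card := Finset.card_sdiff_add_card_eq_card hY1sub
  have hY1card : D1.card + 1 ≤ Y1.card := by
    rcases Nat.eq_zero_or_pos D.card with h0 | h1
    · omega
    · omega
  -- good-target index sets for SC2 (reversed)
  set T2 : Finset (Fin n) := Z0.filter (fun i => SC2.inp i ∉ D2 ∧ g i ∉ DW) with hT2def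
  set Y2 : Finset (Fin n) := Z0.filter (fun i => SC2.inp i ∈ D2 ∨ g i ∉ DW) with hY2def
  have hYT2 : ∀ i ∈ Y2, i ∈ T2 ∨ SC2.inp i ∈ D2 := by
    intro i hi
    simp only [hY2def, hT2def, Finset.mem_filter] at hi ⊢
    tauto
  have hY2sub : Y2 ⊆ Z0 := Finset.filter_subset _ _
  have hsd2 : (Z0 \ Y2).card ≤ DW.card := by
    apply Finset.card_le_card_of_injOn g ?_ g.injective.injOn
    intro i hi
    simp only [Finset.coe_sdiff, Set.mem_diff, Finset.mem_coe, Finset.mem_sdiff] at hi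
    by_contra hgi
    exact hi.2 (Finset.mem_filter.mpr ⟨hi.1, Or.inr hgi⟩)
  have hsplit2 : (Z0 \ Y2).card + Y2.card = Z0.card := Finset.card_sdiff_add_card_eq_card hY2sub
  have hY2card : D2.card + 1 ≤ Y2.card := by
    rcases Nat.eq_zero_or_pos D.card with h0 | h1
    · omega
    · omega
  -- good inputs
  set A : Finset (Fin n) := Finset.univ.filter (fun j => SC1.inp j ∉ D1 ∧ ∃ i ∈ T1,
      Relation.ReflTransGen (fun a b => SC1.Adj a b ∧ b ∉ D1) (SC1.inp j) (SC1.out i)) with hAdef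
  have hbad1 : (Finset.univ.filter (fun j => ¬(SC1.inp j ∉ D1 ∧ ∃ i ∈ T1,
      Relation.ReflTransGen (fun a b => SC1.Adj a b ∧ b ∉ D1) (SC1.inp j) (SC1.out i)))).card
      ≤ D1.card := by
    apply bad_card_le SC1 hSC1 D1 T1 Y1 hYT1 hY1card hrn1
    intro j hj
    exact (Finset.mem_filter.mp hj).2
  have hAcard : n - S.card ≤ A.card := by
    have hsum := Finset.card_filter_add_card_filter_not
      (s := (Finset.univ : Finset (Fin n))) (p := fun j => SC1.inp j ∉ D1 ∧ ∃ i ∈ T1,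
        Relation.ReflTransGen (fun a b => SC1.Adj a b ∧ b ∉ D1) (SC1.inp j) (SC1.out i))
    rw [Finset.card_univ, Fintype.card_fin] at hsum
    have hD1S : D1.card ≤ S.card := by omega
    rw [hAdef]
    omega
  -- good outputs
  set B : Finset (Fin n) := Finset.univ.filter (fun j => SC2.out j ∉ D2 ∧ ∃ i ∈ T2,
      Relation.ReflTransGen (fun a b => SC2.Adj b a ∧ b ∉ D2) (SC2.out j) (SC2.inp i)) with hBdef
  have hbad2 : (Finset.univ.filter (fun j => ¬(SC2.out j ∉ D2 ∧ ∃ i ∈ T2,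
      Relation.ReflTransGen (fun a b => SC2.Adj b a ∧ b ∉ D2) (SC2.out j) (SC2.inp i)))).card
      ≤ D2.card := by
    apply bad_card_le (revIO SC2) (revSC SC2 hSC2) D2 T2 Y2 hYT2 hY2card hrn2
    intro j hj
    exact (Finset.mem_filter.mp hj).2
  have hBcard : n - S.card ≤ B.card := by
    have hsum := Finset.card_filter_add_card_filter_not
      (s := (Finset.univ : Finset (Fin n))) (p := fun j => SC2.out j ∉ D2 ∧ ∃ i ∈ T2,
        Relation.ReflTransGen (fun a b => SC2.Adj b a ∧ b ∉ D2) (SC2.out j) (SC2.inp i))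
    rw [Finset.card_univ, Fintype.card_fin] at hsum
    have hD2S : D2.card ≤ S.card := by omega
    rw [hBdef]
    omega
  refine ⟨A, B, hAcard, hBcard, ?_⟩
  intro a ha b hb
  rw [hAdef] at ha
  rw [hBdef] at hb
  obtain ⟨hainD, i, hiT, hrtg1⟩ := (Finset.mem_filter.mp ha).2
  obtain ⟨hboutD, i', hiT2, hrtg2rev⟩ := (Finset.mem_filter.mp hb).2
  simp only [hT1def, hX0def, Finset.mem_filter, Finset.mem_univ, true_and] at hiT
  simp only [hT2def, hZ0def, Finset.mem_filter, Finset.mem_univ, true_and] at hiT2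
  obtain ⟨hfiA0, houtD1, hfiDW⟩ := hiT
  obtain ⟨hgiB0, hinpD2, hgiDW⟩ := hiT2
  -- the middle path
  obtain ⟨pm, ⟨hmne, hmch⟩, hmav, hmh, hml⟩ := hconn (f i) hfiA0 (g i') hgiB0
  have hrtgm := pathToRTG pm hmch hmh hml hmav
  -- assemble in the sandwich
  have l1 : Relation.ReflTransGen
      (fun x y => (sandwich GAdj SC1 SC2 f g).Adj x y ∧ y ∉ D)
      (Sum.inl (SC1.inp a)) (Sum.inl (SC1.out i)) :=
    Relation.ReflTransGen.lift Sum.inl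
      (fun x y hxy => ⟨Or.inl ⟨x, y, hxy.1, rfl, rfl⟩, fun h => hxy.2 (Finset.mem_filter.mpr ⟨Finset.mem_univ _, h⟩)⟩) _ _ hrtg1
  have e1 : (fun x y => (sandwich GAdj SC1 SC2 f g).Adj x y ∧ y ∉ D)
      (Sum.inl (SC1.out i)) (Sum.inr (Sum.inl (f i))) :=
    ⟨Or.inr (Or.inr (Or.inr (Or.inl ⟨i, rfl, rfl⟩))), fun h => hfiDW (Finset.mem_filter.mpr ⟨Finset.mem_univ _, h⟩)⟩
  have lmid : Relation.ReflTransGen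
      (fun x y => (sandwich GAdj SC1 SC2 f g).Adj x y ∧ y ∉ D)
      (Sum.inr (Sum.inl (f i))) (Sum.inr (Sum.inl (g i'))) :=
    Relation.ReflTransGen.lift (fun w => Sum.inr (Sum.inl w))
      (fun x y hxy => ⟨Or.inr (Or.inl ⟨x, y, hxy.1, rfl, rfl⟩),
        fun h => hxy.2 (Finset.mem_filter.mpr ⟨Finset.mem_univ _, h⟩)⟩) _ _ hrtgm
  have e2 : (fun x y => (sandwich GAdj SC1 SC2 f g).Adj x y ∧ y ∉ D)
      (Sum.inr (Sum.inl (g i'))) (Sum.inr (Sum.inr (SC2.inp i'))) :=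
    ⟨Or.inr (Or.inr (Or.inr (Or.inr ⟨i', rfl, rfl⟩))), fun h => hinpD2 (Finset.mem_filter.mpr ⟨Finset.mem_univ _, h⟩)⟩
  have hrtg2a : Relation.ReflTransGen (fun u v => SC2.Adj u v ∧ u ∉ D2)
      (SC2.inp i') (SC2.out b) :=
    (Relation.reflTransGen_swap (r := fun u v => SC2.Adj u v ∧ u ∉ D2)).mp hrtg2rev
  have hrtg2b := rtg_shift hrtg2a hboutD
  have l3 : Relation.ReflTransGen
      (fun x y => (sandwich GAdj SC1 SC2 f g).Adj x y ∧ y ∉ D)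
      (Sum.inr (Sum.inr (SC2.inp i'))) (Sum.inr (Sum.inr (SC2.out b))) :=
    Relation.ReflTransGen.lift (fun v => Sum.inr (Sum.inr v))
      (fun x y hxy => ⟨Or.inr (Or.inr (Or.inl ⟨x, y, hxy.1, rfl, rfl⟩)),
        fun h => hxy.2 (Finset.mem_filter.mpr ⟨Finset.mem_univ _, h⟩)⟩) _ _ hrtg2b
  have chain := ((((l1.trans (Relation.ReflTransGen.single e1)).trans lmid).trans
    (Relation.ReflTransGen.single e2)).trans l3)
  have hstart : (Sum.inl (SC1.inp a) : SC1.V ⊕ W ⊕ SC2.V) ∉ D := by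
    exact fun h => hainD (Finset.mem_filter.mpr ⟨Finset.mem_univ _, h⟩)
  exact rtgToConn hstart chain
end

section
/- Let M be a c-maximally ST-robust DAG with n inputs and n outputs. Then O(M) is maximally ST-robust, i.e., (k, n−k)-ST-robust for all 0 ≤ k ≤ n, with respect to its n new input nodes and n new output nodes. -/
/-- The construction `O(M)`: `⌈1/c⌉` disjoint copies of `M` together with `n`
new input nodes and `n` new output nodes; the `k`-th new input feeds the `k`-th
input of every copy, and the `k`-th output of every copy feeds the `k`-th new
output. -/
noncomputable def OMgraph {n : ℕ} (M : IOGraph n) (c : ℝ) : IOGraph n where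
  V := Fin n ⊕ (Fin ⌈1 / c⌉₊ × M.V) ⊕ Fin n
  Adj := fun x y =>
    (∃ (k : Fin n) (j : Fin ⌈1 / c⌉₊),
        x = Sum.inl k ∧ y = Sum.inr (Sum.inl (j, M.inp k))) ∨
    (∃ (j : Fin ⌈1 / c⌉₊) (a b : M.V), M.Adj a b ∧
        x = Sum.inr (Sum.inl (j, a)) ∧ y = Sum.inr (Sum.inl (j, b))) ∨
    (∃ (k : Fin n) (j : Fin ⌈1 / c⌉₊),
        x = Sum.inr (Sum.inl (j, M.out k)) ∧ y = Sum.inr (Sum.inr k))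
  inp := ⟨Sum.inl, Sum.inl_injective⟩
  out := ⟨fun k => Sum.inr (Sum.inr k), fun a b h => by simpa using h⟩

/-- If `M` is a `c`-maximally ST-robust DAG with `n` inputs
and `n` outputs, then `O(M)` is maximally ST-robust, i.e. `(k, n−k)`-ST-robust
for all `0 ≤ k ≤ n`, with respect to its `n` new inputs and `n` new outputs. -/
theorem OMgraph_maxSTRobust {n : ℕ} (M : IOGraph n) (c : ℝ)
    (hc0 : 0 < c) (hc1 : c ≤ 1)
    (hM : ∀ k : ℕ, (k : ℝ) ≤ c * n → STRobust M k (n - k)) :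
    MaxSTRobust (OMgraph M c) := by
  intro k hk D hD
  classical
  set m := ⌈1 / c⌉₊ with hmdef
  have hm1 : 1 ≤ m := Nat.one_le_ceil_iff.mpr (by positivity)
  -- the embedding of copy j
  let ι : Fin m → M.V → (OMgraph M c).V := fun j v => Sum.inr (Sum.inl (j, v))
  have hιinj : ∀ j, Function.Injective (ι j) := by
    intro j u v h
    have h' := Sum.inl_injective (Sum.inr_injective h)
    exact (Prod.ext_iff.mp h').2
  let Dj : Fin m → Finset M.V := fun j => Finset.univ.filter (fun v => ι j v ∈ D)
  let Din : Finset (Fin n) :=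
    Finset.univ.filter (fun a => (Sum.inl a : (OMgraph M c).V) ∈ D)
  let Dout : Finset (Fin n) :=
    Finset.univ.filter (fun b => (Sum.inr (Sum.inr b) : (OMgraph M c).V) ∈ D)
  -- pigeonhole: some copy has few deletions
  have hbi : (Finset.univ.biUnion (fun j : Fin m => (Dj j).image (ι j))) ⊆ D := by
    intro x hx
    simp only [Finset.mem_biUnion, Finset.mem_image] at hx
    obtain ⟨j, -, v, hv, rfl⟩ := hx
    simpa [Dj] using hv
  have hdisj : ∀ j ∈ (Finset.univ : Finset (Fin m)), ∀ j' ∈ (Finset.univ : Finset (Fin m)),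
      j ≠ j' → Disjoint ((Dj j).image (ι j)) ((Dj j').image (ι j')) := by
    intro j _ j' _ hjj'
    rw [Finset.disjoint_left]
    intro x hx hx'
    simp only [Finset.mem_image] at hx hx'
    obtain ⟨v, -, rfl⟩ := hx
    obtain ⟨v', -, h⟩ := hx'
    apply hjj'
    have h' := Sum.inl_injective (Sum.inr_injective h.symm)
    exact (Prod.ext_iff.mp h').1
  have hsum : ∑ j : Fin m, (Dj j).card ≤ D.card := by
    calc ∑ j : Fin m, (Dj j).card
        = ∑ j : Fin m, ((Dj j).image (ι j)).card := by
          refine Finset.sum_congr rfl fun j _ => ?_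
          exact (Finset.card_image_of_injective _ (hιinj j)).symm
      _ = (Finset.univ.biUnion (fun j : Fin m => (Dj j).image (ι j))).card :=
          (Finset.card_biUnion hdisj).symm
      _ ≤ D.card := Finset.card_le_card hbi
  obtain ⟨j, -, hjmin⟩ := Finset.exists_min_image (Finset.univ : Finset (Fin m))
    (fun j => (Dj j).card) ⟨⟨0, hm1⟩, Finset.mem_univ _⟩
  have hpig : m * (Dj j).card ≤ D.card := by
    calc m * (Dj j).card = (Finset.univ : Finset (Fin m)).card • (Dj j).card := by
          simp [Finset.card_univ]
      _ ≤ ∑ i : Fin m, (Dj i).card :=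
          Finset.card_nsmul_le_sum _ _ _ (fun i _ => hjmin i (Finset.mem_univ i))
      _ ≤ D.card := hsum
  -- (Dj j).card ≤ c * n
  have hcm : (1 : ℝ) ≤ c * m := by
    have h1 : (1 / c : ℝ) ≤ (m : ℝ) := Nat.le_ceil _
    calc (1 : ℝ) = c * (1 / c) := by field_simp
      _ ≤ c * m := by nlinarith
  have hDjcard : ((Dj j).card : ℝ) ≤ c * n := by
    have h1 : ((Dj j).card : ℝ) * m ≤ (k : ℝ) := by
      have := hpig.trans hD
      calc ((Dj j).card : ℝ) * m = ((m * (Dj j).card : ℕ) : ℝ) := by push_cast; ring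
        _ ≤ (k : ℝ) := by exact_mod_cast this
    have h0 : (0 : ℝ) ≤ ((Dj j).card : ℝ) := by positivity
    calc ((Dj j).card : ℝ) = ((Dj j).card : ℝ) * 1 := by ring
      _ ≤ ((Dj j).card : ℝ) * (c * m) := by nlinarith
      _ = c * (((Dj j).card : ℝ) * m) := by ring
      _ ≤ c * k := by nlinarith
      _ ≤ c * n := by
          have : (k : ℝ) ≤ (n : ℝ) := by exact_mod_cast hk
          nlinarith
  -- apply the robustness of M in copy j
  obtain ⟨A, B, hA, hB, hAB⟩ := hM (Dj j).card hDjcard (Dj j) le_rfl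
  -- counting: Dj j together with Din (resp. Dout) fits inside D
  have hcount : ∀ X : Finset (Fin n), ∀ f : Fin n → (OMgraph M c).V,
      Function.Injective f → (∀ x, ∀ v : M.V, f x ≠ ι j v) →
      (∀ x ∈ X, f x ∈ D) → (Dj j).card + X.card ≤ D.card := by
    intro X f hf hfι hXD
    have hsub : ((Dj j).image (ι j)) ∪ X.image f ⊆ D := by
      intro x hx
      rcases Finset.mem_union.mp hx with hx | hx
      · obtain ⟨v, hv, rfl⟩ := Finset.mem_image.mp hx
        simpa [Dj] using hv
      · obtain ⟨a, ha, rfl⟩ := Finset.mem_image.mp hx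
        exact hXD a ha
    have hd : Disjoint ((Dj j).image (ι j)) (X.image f) := by
      rw [Finset.disjoint_left]
      intro x hx hx'
      obtain ⟨v, -, rfl⟩ := Finset.mem_image.mp hx
      obtain ⟨a, -, h⟩ := Finset.mem_image.mp hx'
      exact hfι a v h
    calc (Dj j).card + X.card
        = ((Dj j).image (ι j)).card + (X.image f).card := by
          rw [Finset.card_image_of_injective _ (hιinj j),
            Finset.card_image_of_injective _ hf]
      _ = (((Dj j).image (ι j)) ∪ X.image f).card :=
          (Finset.card_union_of_disjoint hd).symm
      _ ≤ D.card := Finset.card_le_card hsub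
  have hin : (Dj j).card + Din.card ≤ D.card := by
    refine hcount Din (fun a => Sum.inl a) (fun a b h => Sum.inl_injective h)
      (fun x v h => by simp [ι] at h) (fun a ha => by simp [Din] at ha; exact ha)
  have hout : (Dj j).card + Dout.card ≤ D.card := by
    refine hcount Dout (fun b => Sum.inr (Sum.inr b))
      (fun a b h => Sum.inr_injective (Sum.inr_injective h))
      (fun x v h => by have := Sum.inr_injective h; simp at this)
      (fun b hb => by simp [Dout] at hb; exact hb)
  -- surviving inputs/outputs
  refine ⟨A.filter (fun a => a ∉ Din), B.filter (fun b => b ∉ Dout), ?_, ?_, ?_⟩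
  · have h1 : (A.filter (fun a => a ∈ Din)).card ≤ Din.card :=
      Finset.card_le_card (fun a ha => (Finset.mem_filter.mp ha).2)
    have h2 := Finset.card_filter_add_card_filter_not (s := A)
      (fun a => a ∈ Din)
    have h3 : (A.filter (fun a => ¬ a ∈ Din)).card
        = (A.filter (fun a => a ∉ Din)).card := rfl
    omega
  · have h1 : (B.filter (fun b => b ∈ Dout)).card ≤ Dout.card :=
      Finset.card_le_card (fun b hb => (Finset.mem_filter.mp hb).2)
    have h2 := Finset.card_filter_add_card_filter_not (s := B)
      (fun b => b ∈ Dout)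
    omega
  · intro a ha b hb
    rw [Finset.mem_filter] at ha hb
    obtain ⟨p, ⟨pne, pchain⟩, pavoid, phead, plast⟩ := hAB a ha.1 b hb.1
    have haD : (Sum.inl a : (OMgraph M c).V) ∉ D := by
      have := ha.2; simpa [Din] using this
    have hbD : (Sum.inr (Sum.inr b) : (OMgraph M c).V) ∉ D := by
      have := hb.2; simpa [Dout] using this
    let o : (OMgraph M c).V := Sum.inr (Sum.inr b)
    let l1 : List (OMgraph M c).V := (Sum.inl a : (OMgraph M c).V) :: p.map (ι j)
    let q : List (OMgraph M c).V := (Sum.inl a : (OMgraph M c).V) :: (p.map (ι j) ++ [o])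
    refine ⟨q, ⟨by simp [q], ?_⟩, ?_, ?_, ?_⟩
    · -- the chain
      show List.IsChain _ q
      erw [List.isChain_cons]
      constructor
      · intro y hy
        obtain ⟨v, p', rfl⟩ := List.exists_cons_of_ne_nil pne
        have hv : v = M.inp a := by simpa using phead
        simp only [List.map_cons, List.cons_append, List.head?_cons,
          Option.mem_def, Option.some.injEq] at hy
        subst hy hv
        exact Or.inl ⟨a, j, rfl, rfl⟩
      · rw [List.isChain_append]
        refine ⟨?_, List.isChain_singleton _, ?_⟩
        · rw [List.isChain_map]
          exact pchain.imp (fun u v h => Or.inr (Or.inl ⟨j, u, v, h, rfl, rfl⟩))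
        · intro x hx y hy
          simp only [List.getLast?_map, Option.mem_def, Option.map_eq_some_iff] at hx
          obtain ⟨w, hw, rfl⟩ := hx
          rw [plast] at hw
          obtain rfl : M.out b = w := by simpa using hw
          simp only [List.head?_cons, Option.mem_def, Option.some.injEq] at hy
          subst hy
          exact Or.inr (Or.inr ⟨b, j, rfl, rfl⟩)
    · -- avoiding D
      intro x hx
      simp only [q, List.mem_cons, List.mem_append, List.mem_map,
        List.mem_singleton, List.not_mem_nil, or_false] at hx
      erw [List.mem_cons, List.mem_append, List.mem_map, List.mem_singleton] at hx
      rcases hx with rfl | ⟨v, hv, rfl⟩ | rfl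
      · exact haD
      · have := pavoid v hv
        simp only [Dj, Finset.mem_filter, Finset.mem_univ, true_and] at this
        exact this
      · exact hbD
    · rfl
    · show q.getLast? = some ((OMgraph M c).out b)
      rw [show q = l1 ++ [o] from rfl, List.getLast?_concat]
      rfl
end

section
/- Every n-connector has at least log2(n!) edges; consequently, every n-connector whose maximum indegree is bounded by a constant δ has at least log2(n!)/δ = Ω(n log n) vertices. -/
namespace ConnProof

variable {V : Type*}

/-- consecutive pairs of a list -/
def pairs (p : List V) : List (V × V) := p.zip p.tail

@[simp] lemma pairs_nil : pairs ([] : List V) = [] := rfl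
@[simp] lemma pairs_single (a : V) : pairs [a] = [] := rfl
@[simp] lemma pairs_cons_cons (a b : V) (t : List V) :
    pairs (a :: b :: t) = (a, b) :: pairs (b :: t) := rfl

lemma mem_of_mem_pairs {p : List V} {u v : V} (h : (u, v) ∈ pairs p) :
    u ∈ p ∧ v ∈ p := by
  induction p with
  | nil => simp [pairs] at h
  | cons a t ih =>
    cases t with
    | nil => simp [pairs] at h
    | cons b t' =>
      rw [pairs_cons_cons] at h
      rcases List.mem_cons.1 h with h | h
      · obtain ⟨rfl, rfl⟩ := Prod.mk.injEq .. ▸ Prod.ext_iff.1 h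
        exact ⟨List.mem_cons_self, List.mem_cons_of_mem _ List.mem_cons_self⟩
      · obtain ⟨h1, h2⟩ := ih h
        exact ⟨List.mem_cons_of_mem _ h1, List.mem_cons_of_mem _ h2⟩

lemma adj_of_mem_pairs {R : V → V → Prop} {p : List V} (hc : p.Chain' R)
    {u v : V} (h : (u, v) ∈ pairs p) : R u v := by
  induction p with
  | nil => simp [pairs] at h
  | cons a t ih =>
    cases t with
    | nil => simp [pairs] at h
    | cons b t' =>
      rw [pairs_cons_cons] at h
      unfold List.Chain' at hc
      rw [List.isChain_cons_cons] at hc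
      rcases List.mem_cons.1 h with h | h
      · obtain ⟨rfl, rfl⟩ := Prod.ext_iff.1 h
        exact hc.1
      · exact ih hc.2 h

lemma pairs_functional {p : List V} (hnd : p.Nodup) {u v w : V}
    (h1 : (u, v) ∈ pairs p) (h2 : (u, w) ∈ pairs p) : v = w := by
  induction p with
  | nil => simp [pairs] at h1
  | cons a t ih =>
    cases t with
    | nil => simp [pairs] at h1
    | cons b t' =>
      rw [pairs_cons_cons] at h1 h2
      rw [List.nodup_cons] at hnd
      rcases List.mem_cons.1 h1 with h1 | h1 <;> rcases List.mem_cons.1 h2 with h2 | h2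
      · obtain ⟨rfl, rfl⟩ := Prod.mk.inj h1.symm
        obtain ⟨-, h2'⟩ := Prod.mk.inj h2.symm
        exact h2'
      · obtain ⟨rfl, rfl⟩ := Prod.mk.inj h1.symm
        exact absurd (mem_of_mem_pairs h2).1 hnd.1
      · obtain ⟨rfl, rfl⟩ := Prod.mk.inj h2.symm
        exact absurd (mem_of_mem_pairs h1).1 hnd.1
      · exact ih hnd.2 h1 h2

/-- the first component of a pair is not the last element of a nodup list -/
lemma getLast_not_fst_pair {p : List V} (hnd : p.Nodup) {y w : V}
    (hy : p.getLast? = some y) (h : (y, w) ∈ pairs p) : False := by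
  induction p with
  | nil => simp [pairs] at h
  | cons a t ih =>
    cases t with
    | nil => simp [pairs] at h
    | cons b t' =>
      rw [pairs_cons_cons] at h
      rw [List.getLast?_cons_cons] at hy
      rw [List.nodup_cons] at hnd
      rcases List.mem_cons.1 h with h | h
      · obtain ⟨rfl, rfl⟩ := Prod.mk.inj h.symm
        rw [List.getLast?_eq_getLast_of_ne_nil (l := b :: t') (by simp)] at hy
        exact hnd.1 (Option.some.inj hy ▸ List.getLast_mem _)
      · exact ih hnd.2 hy h

/-- tracing in a functional graph: two paths with equal heads whose endpoints are
sinks have equal last elements. -/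
lemma trace_unique {F : V × V → Prop} (hfun : ∀ u v w, F (u, v) → F (u, w) → v = w) :
    ∀ p q : List V, p ≠ [] → q ≠ [] →
      (∀ pr ∈ pairs p, F pr) → (∀ pr ∈ pairs q, F pr) →
      p.head? = q.head? →
      (∀ y w, p.getLast? = some y → ¬ F (y, w)) →
      (∀ y w, q.getLast? = some y → ¬ F (y, w)) →
      p.getLast? = q.getLast? := by
  intro p
  induction p with
  | nil => intro q hp; exact absurd rfl hp
  | cons a t ih =>
    intro q hp hq hpF hqF hhead hpend hqend
    cases q with
    | nil => exact absurd rfl hq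
    | cons c q' =>
      have hac : a = c := by simpa using hhead
      subst hac
      cases t with
      | nil =>
        cases q' with
        | nil => rfl
        | cons d q₂ =>
          exact absurd (hqF (a, d) (by simp)) (hpend a d (by simp))
      | cons b t' =>
        cases q' with
        | nil =>
          exact absurd (hpF (a, b) (by simp)) (hqend a b (by simp))
        | cons d q₂ =>
          have hbd : b = d := hfun a b d (hpF (a, b) (by simp)) (hqF (a, d) (by simp))
          subst hbd
          rw [List.getLast?_cons_cons, List.getLast?_cons_cons]
          exact ih (b :: q₂) (by simp) (by simp)
            (fun pr hpr => hpF pr (by rw [pairs_cons_cons]; exact List.mem_cons_of_mem _ hpr))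
            (fun pr hpr => hqF pr (by rw [pairs_cons_cons]; exact List.mem_cons_of_mem _ hpr))
            rfl
            (fun y w hy => hpend y w (by rw [List.getLast?_cons_cons]; exact hy))
            (fun y w hy => hqend y w (by rw [List.getLast?_cons_cons]; exact hy))

lemma not_nodup_split {p : List V} (h : ¬ p.Nodup) :
    ∃ (l₁ : List V) (x : V) (l₂ l₃ : List V), p = l₁ ++ x :: (l₂ ++ x :: l₃) := by
  induction p with
  | nil => exact absurd List.nodup_nil h
  | cons a t ih =>
    by_cases ha : a ∈ t
    · obtain ⟨s, u, rfl⟩ := List.append_of_mem ha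
      exact ⟨[], a, s, u, rfl⟩
    · have : ¬ t.Nodup := fun hnd => h (List.nodup_cons.2 ⟨ha, hnd⟩)
      obtain ⟨l₁, x, l₂, l₃, rfl⟩ := ih this
      exact ⟨a :: l₁, x, l₂, l₃, rfl⟩


/-- loop erasure: every chain has a nodup sub-chain with same head and last -/
lemma dedup_chain {R : V → V → Prop} :
    ∀ (N : ℕ) (p : List V), p.length ≤ N → p.Chain' R → p ≠ [] →
      ∃ q : List V, q.Chain' R ∧ q ≠ [] ∧ q.Nodup ∧ q.head? = p.head? ∧
        q.getLast? = p.getLast? ∧ ∀ x ∈ q, x ∈ p := by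
  intro N
  induction N with
  | zero =>
    intro p hl hc hp
    cases p with
    | nil => exact absurd rfl hp
    | cons a t => simp at hl
  | succ N ih =>
    intro p hl hc hp
    by_cases hnd : p.Nodup
    · exact ⟨p, hc, hp, hnd, rfl, rfl, fun x hx => hx⟩
    · obtain ⟨l₁, x, l₂, l₃, rfl⟩ := not_nodup_split hnd
      have hclean : (l₁ ++ x :: l₃).Chain' R := by
        unfold List.Chain' at hc ⊢
        rw [List.isChain_append] at hc ⊢
        refine ⟨hc.1, ?_, ?_⟩
        · have hsuf : (x :: l₃) <:+ (x :: (l₂ ++ x :: l₃)) := by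
            have : x :: (l₂ ++ x :: l₃) = (x :: l₂) ++ (x :: l₃) := by simp
            rw [this]; exact List.suffix_append _ _
          exact hc.2.1.suffix hsuf
        · intro a ha y hy
          exact hc.2.2 a ha y (by simpa using hy)
      have hlen : (l₁ ++ x :: l₃).length ≤ N := by
        simp only [List.length_append, List.length_cons] at hl ⊢
        omega
      obtain ⟨q, hq1, hq2, hq3, hq4, hq5, hq6⟩ :=
        ih (l₁ ++ x :: l₃) hlen hclean (by simp)
      refine ⟨q, hq1, hq2, hq3, ?_, ?_, ?_⟩
      · rw [hq4]
        cases l₁ <;> simp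
      · rw [hq5]
        obtain ⟨t, ht⟩ : ∃ t, (x :: l₃).getLast? = some t :=
          ⟨(x :: l₃).getLast (by simp), List.getLast?_eq_getLast _⟩
        have h2 : x :: (l₂ ++ x :: l₃) = (x :: l₂) ++ (x :: l₃) := by simp
        rw [List.getLast?_append, h2, List.getLast?_append, List.getLast?_append, ht]
        rfl
      · intro v hv
        have := hq6 v hv
        simp only [List.mem_append, List.mem_cons] at this ⊢
        tauto

end ConnProof

section MainLemmas

lemma exists_routing {n : ℕ} (G : IOGraph n) (hG : Connector G) (hn : 1 ≤ n)
    (π : Equiv.Perm (Fin n)) :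
    ∃ Q : Fin n → List G.V,
      (∀ i, (Q i).Chain' G.Adj ∧ Q i ≠ [] ∧ (Q i).Nodup ∧
        (Q i).head? = some (G.inp i) ∧ (Q i).getLast? = some (G.out (π i))) ∧
      ∀ i j, i ≠ j → ∀ v ∈ Q i, v ∉ Q j := by
  obtain ⟨P, hP, hdisj⟩ := hG.2 n hn le_rfl (Function.Embedding.refl _) π.toEmbedding
  have h : ∀ i : Fin n, ∃ q : List G.V, q.Chain' G.Adj ∧ q ≠ [] ∧ q.Nodup ∧
      q.head? = (P i).head? ∧ q.getLast? = (P i).getLast? ∧ ∀ x ∈ q, x ∈ P i :=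
    fun i => ConnProof.dedup_chain (P i).length (P i) le_rfl (hP i).1.2 (hP i).1.1
  choose Q h1 h2 h3 h4 h5 h6 using h
  refine ⟨Q, fun i => ⟨h1 i, h2 i, h3 i, ?_, ?_⟩, ?_⟩
  · rw [h4 i]; exact (hP i).2.1
  · rw [h5 i]; exact (hP i).2.2
  · intro i j hij v hv hvj
    exact hdisj i j hij v (h6 i v hv) (h6 j v hvj)

lemma connector_factorial_le {n : ℕ} (G : IOGraph n) (hG : Connector G) :
    Nat.factorial n ≤ 2 ^ numEdges G.Adj := by
  classical
  rcases Nat.eq_zero_or_pos n with rfl | hn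
  · simpa using Nat.one_le_two_pow
  have hex := fun π => exists_routing G hG hn π
  choose Q hQ hdisj using hex
  set F : Equiv.Perm (Fin n) → Finset (G.V × G.V) :=
    fun π => Finset.univ.biUnion (fun i => (ConnProof.pairs (Q π i)).toFinset) with hF
  have hFadj : ∀ π e, e ∈ F π → G.Adj e.1 e.2 := by
    rintro π ⟨u, v⟩ he
    simp only [hF, Finset.mem_biUnion, List.mem_toFinset] at he
    obtain ⟨i, -, hi⟩ := he
    exact ConnProof.adj_of_mem_pairs (hQ π i).1 hi
  have hfun : ∀ π u v w, (u, v) ∈ F π → (u, w) ∈ F π → v = w := by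
    intro π u v w h1 h2
    simp only [hF, Finset.mem_biUnion, List.mem_toFinset] at h1 h2
    obtain ⟨i, -, h1⟩ := h1
    obtain ⟨j, -, h2⟩ := h2
    rcases eq_or_ne i j with rfl | hij
    · exact ConnProof.pairs_functional (hQ π i).2.2.1 h1 h2
    · exact absurd (ConnProof.mem_of_mem_pairs h2).1
        (hdisj π i j hij u (ConnProof.mem_of_mem_pairs h1).1)
  have hgl_mem : ∀ π (i : Fin n), G.out (π i) ∈ Q π i := by
    intro π i
    have h := (hQ π i).2.2.2.2
    rw [List.getLast?_eq_getLast_of_ne_nil ((hQ π i).2.1)] at h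
    exact (Option.some.inj h) ▸ List.getLast_mem _
  have hsink : ∀ π (i : Fin n) w, (G.out (π i), w) ∉ F π := by
    intro π i w hmem
    simp only [hF, Finset.mem_biUnion, List.mem_toFinset] at hmem
    obtain ⟨j, -, hj⟩ := hmem
    rcases eq_or_ne i j with rfl | hij
    · exact ConnProof.getLast_not_fst_pair (hQ π i).2.2.1 (hQ π i).2.2.2.2 hj
    · exact hdisj π i j hij _ (hgl_mem π i) (ConnProof.mem_of_mem_pairs hj).1
  have hpairsF : ∀ π (i : Fin n) pr, pr ∈ ConnProof.pairs (Q π i) → pr ∈ F π := by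
    intro π i pr hpr
    simp only [hF, Finset.mem_biUnion, List.mem_toFinset]
    exact ⟨i, Finset.mem_univ i, hpr⟩
  -- the encoding map
  set Φ : Equiv.Perm (Fin n) → ({e : G.V × G.V // G.Adj e.1 e.2} → Prop) :=
    fun π e => e.val ∈ F π with hΦ
  have hΦinj : Function.Injective Φ := by
    intro π π' heq
    have hFeq : F π = F π' := by
      ext e
      constructor
      · intro he
        have : Φ π ⟨e, hFadj π e he⟩ := he
        rw [heq] at this
        exact this
      · intro he
        have : Φ π' ⟨e, hFadj π' e he⟩ := he
        rw [← heq] at this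
        exact this
    ext i
    have hgl := ConnProof.trace_unique (F := fun e => e ∈ F π)
      (fun u v w h1 h2 => hfun π u v w h1 h2)
      (Q π i) (Q π' i) (hQ π i).2.1 (hQ π' i).2.1
      (fun pr hpr => hpairsF π i pr hpr)
      (fun pr hpr => hFeq ▸ hpairsF π' i pr hpr)
      (by rw [(hQ π i).2.2.2.1, (hQ π' i).2.2.2.1])
      (by
        intro y w hy
        rw [(hQ π i).2.2.2.2] at hy
        obtain rfl := Option.some.inj hy
        exact hsink π i w)
      (by
        intro y w hy
        rw [(hQ π' i).2.2.2.2] at hy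
        obtain rfl := Option.some.inj hy
        rw [hFeq]
        exact hsink π' i w)
    rw [(hQ π i).2.2.2.2, (hQ π' i).2.2.2.2] at hgl
    exact congrArg Fin.val (G.out.injective (Option.some.inj hgl))
  have hcard : Nat.card ({e : G.V × G.V // G.Adj e.1 e.2} → Prop) = 2 ^ numEdges G.Adj := by
    rw [Nat.card_fun]
    congr 1
    rw [Nat.card_congr Equiv.propEquivBool, Nat.card_eq_fintype_card, Fintype.card_bool]
  calc Nat.factorial n = Nat.card (Equiv.Perm (Fin n)) := by
        rw [Nat.card_eq_fintype_card, Fintype.card_perm, Fintype.card_fin]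
    _ ≤ Nat.card ({e : G.V × G.V // G.Adj e.1 e.2} → Prop) :=
        Nat.card_le_card_of_injective Φ hΦinj
    _ = 2 ^ numEdges G.Adj := hcard

lemma numEdges_le_card_mul {V : Type*} [Fintype V] (Adj : V → V → Prop) (δ : ℕ)
    (h : ∀ v, indeg Adj v ≤ δ) : numEdges Adj ≤ Nat.card V * δ := by
  classical
  letI : ∀ a b : V, Decidable (Adj a b) := fun _ _ => Classical.propDecidable _
  have he : {e : V × V // Adj e.1 e.2} ≃ Σ v : V, {u // Adj u v} :=
    { toFun := fun e => ⟨e.1.2, ⟨e.1.1, e.2⟩⟩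
      invFun := fun s => ⟨(s.2.1, s.1), s.2.2⟩
      left_inv := fun ⟨⟨a, b⟩, hab⟩ => rfl
      right_inv := fun ⟨v, ⟨u, huv⟩⟩ => rfl }
  have h1 : numEdges Adj = ∑ v : V, indeg Adj v := by
    unfold numEdges indeg
    rw [Nat.card_congr he, Nat.card_eq_fintype_card, Fintype.card_sigma]
    exact Finset.sum_congr rfl fun v _ => (Nat.card_eq_fintype_card).symm
  rw [h1, Nat.card_eq_fintype_card]
  calc ∑ v : V, indeg Adj v ≤ ∑ _v : V, δ := Finset.sum_le_sum fun v _ => h v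
    _ = Fintype.card V * δ := by rw [Finset.sum_const, Finset.card_univ, smul_eq_mul]

end MainLemmas

/-- Every `n`-connector has at least `log₂(n!)` edges; as a
consequence, every `n`-connector whose maximum indegree is bounded by a constant
`δ` has at least `log₂(n!)/δ = Ω(n log n)` vertices. -/
theorem connector_edge_lower_bound {n : ℕ} (G : IOGraph n) (hG : Connector G) :
    Real.logb 2 (Nat.factorial n) ≤ (numEdges G.Adj : ℝ) ∧
    ∀ δ : ℕ, 0 < δ → (∀ v : G.V, indeg G.Adj v ≤ δ) →
      Real.logb 2 (Nat.factorial n) / (δ : ℝ) ≤ (Nat.card G.V : ℝ) := by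
  have hfact := connector_factorial_le G hG
  have hfpos : (0 : ℝ) < (Nat.factorial n : ℝ) := by
    exact_mod_cast Nat.factorial_pos n
  have h1 : Real.logb 2 (Nat.factorial n) ≤ (numEdges G.Adj : ℝ) := by
    calc Real.logb 2 (Nat.factorial n)
        ≤ Real.logb 2 ((2 : ℝ) ^ numEdges G.Adj) := by
          apply Real.logb_le_logb_of_le one_lt_two hfpos
          exact_mod_cast hfact
      _ = (numEdges G.Adj : ℝ) := by
          rw [Real.logb_pow, Real.logb_self_eq_one one_lt_two, mul_one]
  refine ⟨h1, fun δ hδ hindeg => ?_⟩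
  have hedges : numEdges G.Adj ≤ Nat.card G.V * δ := numEdges_le_card_mul G.Adj δ hindeg
  have hδR : (0 : ℝ) < (δ : ℝ) := by exact_mod_cast hδ
  rw [div_le_iff₀ hδR]
  calc Real.logb 2 (Nat.factorial n) ≤ (numEdges G.Adj : ℝ) := h1
    _ ≤ (Nat.card G.V : ℝ) * (δ : ℝ) := by exact_mod_cast hedges
end
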